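/- Let r > 0 and let φ_n : (0,r) → [0,1] be measurable functions converging Lebesgue-almost everywhere to a function φ. Then N_r(φ_n) converges to N_r(φ) uniformly on every compact subset of (0,r), where N_r(ψ)(s) := (log(r/s))^{−1} ∫ₛ^r ψ(t)·t^{−1} dt. -/

import Mathlib

open MeasureTheory Real Set Filter

/-- Part (b) of the paper's Lemma on Lebesgue derivatives: if measurable functions
`φ_n : (0,r) → [0,1]` converge Lebesgue-a.e. to `φ`, then the Nevanlinna transforms
`N_r(φ_n)(s) = (log(r/s))⁻¹ ∫ₛ^r φ_n(t)/t dt` converge to `N_r(φ)` uniformly on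
compact subsets of `(0,r)`. -/
theorem stmt_4 (r : ℝ) (hr : 0 < r) (φ : ℕ → ℝ → ℝ) (ψ : ℝ → ℝ)
    (hmeas : ∀ n, Measurable (φ n))
    (hrange : ∀ n, ∀ t ∈ Ioo (0:ℝ) r, φ n t ∈ Icc (0:ℝ) 1)
    (hconv : ∀ᵐ t ∂(volume.restrict (Ioo (0:ℝ) r)),
      Tendsto (fun n => φ n t) atTop (nhds (ψ t))) :
    ∀ K : Set ℝ, K ⊆ Ioo (0:ℝ) r → IsCompact K →
      TendstoUniformlyOn
        (fun n s => (Real.log (r / s))⁻¹ * ∫ t in Ioo s r, φ n t * t⁻¹)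
        (fun s => (Real.log (r / s))⁻¹ * ∫ t in Ioo s r, ψ t * t⁻¹)
        atTop K := by
  intro K hK hKc
  rcases K.eq_empty_or_nonempty with rfl | hne
  · exact tendstoUniformlyOn_empty
  obtain ⟨a, haK, ha_lb⟩ := hKc.exists_isLeast hne
  obtain ⟨b, hbK, hb_ub⟩ := hKc.exists_isGreatest hne
  have haI := hK haK
  have hbI := hK hbK
  have ha0 : 0 < a := haI.1
  have hb0 : 0 < b := hbI.1
  have hbr : b < r := hbI.2
  have hsub : Ioo a r ⊆ Ioo (0:ℝ) r := Ioo_subset_Ioo ha0.le le_rfl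
  have hle : volume.restrict (Ioo a r) ≤ volume.restrict (Ioo (0:ℝ) r) :=
    Measure.restrict_mono hsub le_rfl
  have hψm : AEMeasurable ψ (volume.restrict (Ioo (0:ℝ) r)) :=
    aemeasurable_of_tendsto_metrizable_ae _ (fun n => (hmeas n).aemeasurable) hconv
  have hψb : ∀ᵐ t ∂volume.restrict (Ioo (0:ℝ) r), ψ t ∈ Icc (0:ℝ) 1 := by
    filter_upwards [hconv, ae_restrict_mem measurableSet_Ioo] with t ht htI
    exact isClosed_Icc.mem_of_tendsto ht (Filter.Eventually.of_forall fun n => hrange n t htI)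
  -- integrability helper
  have hint : ∀ f : ℝ → ℝ, AEMeasurable f (volume.restrict (Ioo a r)) →
      (∀ᵐ t ∂volume.restrict (Ioo a r), |f t| ≤ 2) →
      IntegrableOn (fun t => f t * t⁻¹) (Ioo a r) := by
    intro f hfm hfb
    have hconst : IntegrableOn (fun _ : ℝ => (2:ℝ) * a⁻¹) (Ioo a r) :=
      integrableOn_const measure_Ioo_lt_top.ne
    refine Integrable.mono' hconst
      ((hfm.mul measurable_inv.aemeasurable).aestronglyMeasurable) ?_
    filter_upwards [hfb, ae_restrict_mem measurableSet_Ioo] with t hft htI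
    have ht0 : 0 < t := lt_trans ha0 htI.1
    rw [Real.norm_eq_abs, abs_mul, abs_inv, abs_of_pos ht0]
    exact mul_le_mul hft (inv_anti₀ ha0 htI.1.le) (by positivity) (by norm_num)
  have hφb : ∀ n, ∀ᵐ t ∂volume.restrict (Ioo a r), |φ n t| ≤ 2 := by
    intro n
    filter_upwards [ae_restrict_mem measurableSet_Ioo] with t htI
    have := hrange n t (hsub htI)
    rw [abs_le]; constructor <;> linarith [this.1, this.2]
  have hψb' : ∀ᵐ t ∂volume.restrict (Ioo a r), ψ t ∈ Icc (0:ℝ) 1 := ae_mono hle hψb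
  have hψm' : AEMeasurable ψ (volume.restrict (Ioo a r)) := hψm.mono_measure hle
  have hφint : ∀ n, IntegrableOn (fun t => φ n t * t⁻¹) (Ioo a r) :=
    fun n => hint (φ n) (hmeas n).aemeasurable (hφb n)
  have hψint : IntegrableOn (fun t => ψ t * t⁻¹) (Ioo a r) := by
    refine hint ψ hψm' ?_
    filter_upwards [hψb'] with t ht
    rw [abs_le]; constructor <;> linarith [ht.1, ht.2]
  have hdint : ∀ n, IntegrableOn (fun t => |φ n t - ψ t| * t⁻¹) (Ioo a r) := by
    intro n
    refine hint _ (measurable_abs.comp_aemeasurable ((hmeas n).aemeasurable.sub hψm')) ?_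
    filter_upwards [hψb', ae_restrict_mem measurableSet_Ioo] with t ht htI
    have := hrange n t (hsub htI)
    rw [abs_abs, abs_le]; constructor <;> linarith [this.1, this.2, ht.1, ht.2]
  -- dominated convergence
  set g : ℕ → ℝ := fun n => ∫ t in Ioo a r, |φ n t - ψ t| * t⁻¹ with hg_def
  have hg0 : Tendsto g atTop (nhds 0) := by
    have h := tendsto_integral_of_dominated_convergence
      (μ := volume.restrict (Ioo a r))
      (F := fun n t => |φ n t - ψ t| * t⁻¹) (f := fun _ => (0:ℝ))
      (bound := fun t => 2 * t⁻¹)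
      (fun n => (((measurable_abs.comp_aemeasurable ((hmeas n).aemeasurable.sub hψm')).mul
        measurable_inv.aemeasurable).aestronglyMeasurable))
      (by
        have : IntegrableOn (fun t : ℝ => (2:ℝ) * t⁻¹) (Ioo a r) := by
          have hconst : IntegrableOn (fun _ : ℝ => (2:ℝ) * a⁻¹) (Ioo a r) :=
            integrableOn_const measure_Ioo_lt_top.ne
          refine Integrable.mono' hconst
            ((measurable_const.mul measurable_inv).aestronglyMeasurable) ?_
          filter_upwards [ae_restrict_mem measurableSet_Ioo] with t htI
          have ht0 : 0 < t := lt_trans ha0 htI.1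
          rw [Real.norm_eq_abs, abs_mul, abs_inv, abs_of_pos ht0, abs_two]
          exact mul_le_mul_of_nonneg_left (inv_anti₀ ha0 htI.1.le) (by norm_num)
        exact this)
      (by
        intro n
        filter_upwards [hψb', ae_restrict_mem measurableSet_Ioo] with t ht htI
        have h1 := hrange n t (hsub htI)
        have ht0 : 0 < t := lt_trans ha0 htI.1
        rw [Real.norm_eq_abs, abs_mul, abs_abs, abs_inv, abs_of_pos ht0]
        have : |φ n t - ψ t| ≤ 2 := by
          rw [abs_le]; constructor <;> linarith [h1.1, h1.2, ht.1, ht.2]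
        exact mul_le_mul_of_nonneg_right this (by positivity))
      (by
        filter_upwards [ae_mono hle hconv] with t ht
        have : Tendsto (fun n => |φ n t - ψ t|) atTop (nhds 0) := by
          have := (ht.sub (tendsto_const_nhds (x := ψ t))).abs
          simpa using this
        simpa using this.mul_const t⁻¹)
    simpa using h
  -- constant C
  have hlogb : 0 < Real.log (r / b) := Real.log_pos ((one_lt_div hb0).2 hbr)
  set C : ℝ := (Real.log (r / b))⁻¹ with hC_def
  have hC0 : 0 < C := inv_pos.2 hlogb
  rw [Metric.tendstoUniformlyOn_iff]
  intro ε hε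
  have hCg : Tendsto (fun n => C * g n) atTop (nhds 0) := by
    simpa using hg0.const_mul C
  filter_upwards [hCg.eventually (gt_mem_nhds hε)] with n hn s hsK
  have hsI := hK hsK
  have hs0 : 0 < s := hsI.1
  have hsr : s < r := hsI.2
  have hsa : a ≤ s := ha_lb hsK
  have hsb : s ≤ b := hb_ub hsK
  have hsub2 : Ioo s r ⊆ Ioo a r := Ioo_subset_Ioo hsa le_rfl
  have I1 : IntegrableOn (fun t => φ n t * t⁻¹) (Ioo s r) := (hφint n).mono_set hsub2
  have I2 : IntegrableOn (fun t => ψ t * t⁻¹) (Ioo s r) := hψint.mono_set hsub2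
  have hlogs : 0 < Real.log (r / s) := Real.log_pos ((one_lt_div hs0).2 hsr)
  have hCs : (Real.log (r / s))⁻¹ ≤ C := by
    apply inv_anti₀ hlogb
    apply Real.log_le_log (by positivity)
    gcongr
  have key : |(∫ t in Ioo s r, ψ t * t⁻¹) - ∫ t in Ioo s r, φ n t * t⁻¹| ≤ g n := by
    rw [← integral_sub I2 I1]
    calc |∫ t in Ioo s r, (ψ t * t⁻¹ - φ n t * t⁻¹)|
        ≤ ∫ t in Ioo s r, |ψ t * t⁻¹ - φ n t * t⁻¹| :=
          by
            simpa [Real.norm_eq_abs] using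
              norm_integral_le_integral_norm (μ := volume.restrict (Ioo s r))
                (fun t => ψ t * t⁻¹ - φ n t * t⁻¹)
      _ = ∫ t in Ioo s r, |φ n t - ψ t| * t⁻¹ := by
          refine integral_congr_ae ?_
          filter_upwards [ae_restrict_mem measurableSet_Ioo] with t htI
          have ht0 : 0 < t := lt_trans hs0 htI.1
          rw [← sub_mul, abs_mul, abs_inv, abs_of_pos ht0, abs_sub_comm]
      _ ≤ g n := by
          refine setIntegral_mono_set (hdint n) ?_ hsub2.eventuallyLE
          filter_upwards [ae_restrict_mem measurableSet_Ioo] with t htI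
          have ht0 : 0 < t := lt_trans ha0 htI.1
          positivity
  calc dist ((Real.log (r / s))⁻¹ * ∫ t in Ioo s r, ψ t * t⁻¹)
        ((Real.log (r / s))⁻¹ * ∫ t in Ioo s r, φ n t * t⁻¹)
      = (Real.log (r / s))⁻¹ *
        |(∫ t in Ioo s r, ψ t * t⁻¹) - ∫ t in Ioo s r, φ n t * t⁻¹| := by
        rw [Real.dist_eq, ← mul_sub, abs_mul, abs_of_pos (inv_pos.2 hlogs)]
    _ ≤ C * g n := by
        apply mul_le_mul hCs key (abs_nonneg _) hC0.le
    _ < ε := hn
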